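/- Assume f is twice differentiable and satisfies the cubic upper bound with constant L_H > 0, and let ε ∈ (0,1]. Let x ∈ ℝⁿ and let d ∈ ℝⁿ satisfy d_i = 0 whenever x_i = 0. Define J₊ = {i : x_i > √ε and d_i < 0}, J₋ = {i : x_i < −√ε and d_i > 0}, J₀ = {i : 0 < |x_i| ≤ √ε and d_i < 0}, and set t₊ = min_{i∈J₊}(−x_i/d_i), t₋ = min_{i∈J₋}(−x_i/d_i), t₀ = min_{i∈J₀}(−1/d_i), each taken as +∞ when the corresponding set is empty. Then for every t ∈ (0, min{t₊, t₋, t₀}]: φ(x + t·S_{x,ε}d) ≤ φ(x) + t·⟨g(x), S_{x,ε}d⟩ + (t²/2)·⟨S_{x,ε}d, ∇²f(x)·S_{x,ε}d⟩ + (L_H/6)·t³·‖d‖³. -/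

import Mathlib

open scoped RealInnerProductSpace

noncomputable section

/-- `ℝⁿ` with the Euclidean norm. -/
abbrev E (n : ℕ) := EuclideanSpace ℝ (Fin n)

/-- The vector `g(x)` measuring first-order stationarity of `f + lam‖·‖₁`. -/
def gvec (n : ℕ) (f : E n → ℝ) (lam : ℝ) (x : E n) : E n := WithLp.toLp 2 fun i =>
  if 0 < x i then gradient f x i + lam
  else if x i < 0 then gradient f x i - lam
  else gradient f x i - min (max (-lam) (gradient f x i)) lam

/-- The proximal-gradient residual `G_t(x) = t (x - prox_{(lam/t)‖·‖₁}(x - ∇f(x)/t))`. -/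
def Gres (n : ℕ) (f : E n → ℝ) (lam t : ℝ) (x : E n) : E n := WithLp.toLp 2 fun i =>
  if (gradient f x i + lam) / t < x i then gradient f x i + lam
  else if x i < (gradient f x i - lam) / t then gradient f x i - lam
  else t * x i

/-- The proximal-gradient update `P_t(x) = prox_{(lam/t)‖·‖₁}(x - ∇f(x)/t)` (soft-thresholding). -/
def Pt (n : ℕ) (f : E n → ℝ) (lam t : ℝ) (x : E n) : E n := WithLp.toLp 2 fun i =>
  if lam / t < x i - gradient f x i / t then x i - gradient f x i / t - lam / t
  else if x i - gradient f x i / t < -(lam / t) then x i - gradient f x i / t + lam / t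
  else 0

/-- The objective `φ(x) = f(x) + lam ‖x‖₁`. -/
def phi (n : ℕ) (f : E n → ℝ) (lam : ℝ) (x : E n) : ℝ := f x + lam * ∑ i, |x i|

/-- The Hessian of `f` at `x`, as a continuous linear map. -/
def hess (n : ℕ) (f : E n → ℝ) (x : E n) : E n →L[ℝ] E n := fderiv ℝ (gradient f) x

/-- The scaling map `S_{x,ε}`: identity on coordinates with `|x_i| > √ε`, multiplication by
`x_i` on the others. -/
def Smap (n : ℕ) (x : E n) (eps : ℝ) (u : E n) : E n := WithLp.toLp 2 fun i =>
  if Real.sqrt eps < |x i| then u i else x i * u i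

/-- The relaxed first-order residual vector `g^ε(x)`. -/
def gveps (n : ℕ) (f : E n → ℝ) (lam eps : ℝ) (x : E n) : E n := WithLp.toLp 2 fun i =>
  if Real.sqrt eps < x i then gradient f x i + lam
  else if x i < -Real.sqrt eps then gradient f x i - lam
  else gradient f x i -
    min (max (-(lam + eps ^ ((3:ℝ)/4))) (gradient f x i)) (lam + eps ^ ((3:ℝ)/4))

/-- Descent-type upper bound on `φ(x + t S_{x,ε} d)` along a scaled direction
`d` (vanishing on the zero coordinates of `x`) for stepsizes `t` not exceeding the breakpoints
`t₊, t₋, t₀`. -/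
theorem stmt7 {n : ℕ} (f : E n → ℝ) (hf1 : Differentiable ℝ f)
    (hf2 : Differentiable ℝ (gradient f)) (lam : ℝ) (hlam : 0 < lam)
    (LH : ℝ) (hLH : 0 < LH)
    (hcubic : ∀ x y : E n, f y ≤ f x + ⟪gradient f x, y - x⟫ +
      1 / 2 * ⟪y - x, hess n f x (y - x)⟫ + LH / 6 * ‖y - x‖ ^ 3)
    (ε : ℝ) (hε : ε ∈ Set.Ioc (0:ℝ) 1)
    (x d : E n) (hd : ∀ i, x i = 0 → d i = 0)
    (t : ℝ) (ht : 0 < t)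
    (htp : ∀ i, Real.sqrt ε < x i → d i < 0 → t ≤ -x i / d i)
    (htm : ∀ i, x i < -Real.sqrt ε → 0 < d i → t ≤ -x i / d i)
    (ht0 : ∀ i, 0 < |x i| → |x i| ≤ Real.sqrt ε → d i < 0 → t ≤ -1 / d i) :
    phi n f lam (x + t • Smap n x ε d) ≤
      phi n f lam x + t * ⟪gvec n f lam x, Smap n x ε d⟫ +
        t ^ 2 / 2 * ⟪Smap n x ε d, hess n f x (Smap n x ε d)⟫ +
        LH / 6 * t ^ 3 * ‖d‖ ^ 3 := by
  set s : E n := Smap n x ε d with hs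
  have hε1 : Real.sqrt ε ≤ 1 := by
    rw [show (1:ℝ) = Real.sqrt 1 by simp]
    exact Real.sqrt_le_sqrt hε.2
  have hs_le : ∀ i, |s i| ≤ |d i| := by
    intro i
    rw [hs]
    unfold Smap
    simp only [PiLp.toLp_apply]
    split
    · exact le_refl _
    · rename_i hb
      push_neg at hb
      rw [abs_mul]
      calc |x i| * |d i| ≤ 1 * |d i| := by
            apply mul_le_mul_of_nonneg_right (le_trans hb hε1) (abs_nonneg _)
        _ = |d i| := one_mul _
  have hnorm : ‖s‖ ≤ ‖d‖ := by
    rw [EuclideanSpace.norm_eq, EuclideanSpace.norm_eq]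
    apply Real.sqrt_le_sqrt
    apply Finset.sum_le_sum
    intro i _
    rw [Real.norm_eq_abs, Real.norm_eq_abs]
    exact pow_le_pow_left₀ (abs_nonneg _) (hs_le i) 2
  have habs : ∀ i, lam * |x i + t * s i| ≤
      lam * |x i| + t * ((gvec n f lam x i - gradient f x i) * s i) := by
    intro i
    rcases lt_trichotomy (x i) 0 with hxi | hxi | hxi
    · -- x i < 0
      have hg : gvec n f lam x i - gradient f x i = -lam := by
        simp [gvec, hxi, hxi.not_gt]
      have hneg : x i + t * s i ≤ 0 := by
        by_cases hb : Real.sqrt ε < |x i|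
        · have hsv : s i = d i := by simp [hs, Smap, hb]
          have hx' : x i < -Real.sqrt ε := by
            rw [abs_of_neg hxi] at hb; linarith
          rcases le_or_gt (d i) 0 with hdi | hdi
          · rw [hsv]; nlinarith
          · have ht' := htm i hx' hdi
            have h1 : t * d i ≤ (-x i / d i) * d i :=
              mul_le_mul_of_nonneg_right ht' hdi.le
            rw [div_mul_cancel₀ _ hdi.ne'] at h1
            rw [hsv]; linarith
        · have hsv : s i = x i * d i := by simp [hs, Smap, hb]
          push_neg at hb
          rcases le_or_gt 0 (d i) with hdi | hdi
          · rw [hsv]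
            nlinarith [mul_nonneg ht.le hdi, mul_nonpos_of_nonpos_of_nonneg hxi.le (mul_nonneg ht.le hdi)]
          · have ht' := ht0 i (abs_pos.2 hxi.ne) hb hdi
            have h1 : (-1 / d i) * d i ≤ t * d i :=
              mul_le_mul_of_nonpos_right ht' hdi.le
            rw [div_mul_cancel₀ _ hdi.ne] at h1
            rw [hsv]; nlinarith
      rw [abs_of_nonpos hneg, abs_of_neg hxi, hg]
      nlinarith [hneg]
    · -- x i = 0
      have hsv : s i = 0 := by
        simp [hs, Smap, hd i hxi, hxi]
      rw [hsv]
      simp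
    · -- 0 < x i
      have hg : gvec n f lam x i - gradient f x i = lam := by
        simp [gvec, hxi]
      have hpos : 0 ≤ x i + t * s i := by
        by_cases hb : Real.sqrt ε < |x i|
        · have hsv : s i = d i := by simp [hs, Smap, hb]
          have hx' : Real.sqrt ε < x i := by
            rwa [abs_of_pos hxi] at hb
          rcases le_or_gt 0 (d i) with hdi | hdi
          · rw [hsv]; nlinarith
          · have ht' := htp i hx' hdi
            have h1 : (-x i / d i) * d i ≤ t * d i :=
              mul_le_mul_of_nonpos_right ht' hdi.le
            rw [div_mul_cancel₀ _ hdi.ne] at h1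
            rw [hsv]; linarith
        · have hsv : s i = x i * d i := by simp [hs, Smap, hb]
          push_neg at hb
          rcases le_or_gt 0 (d i) with hdi | hdi
          · rw [hsv]
            nlinarith [mul_nonneg (mul_nonneg ht.le hxi.le) hdi]
          · have ht' := ht0 i (abs_pos.2 hxi.ne') hb hdi
            have h1 : (-1 / d i) * d i ≤ t * d i :=
              mul_le_mul_of_nonpos_right ht' hdi.le
            rw [div_mul_cancel₀ _ hdi.ne] at h1
            rw [hsv]; nlinarith
      rw [abs_of_nonneg hpos, abs_of_pos hxi, hg]
      nlinarith [hpos]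
  have hl1 : lam * ∑ i, |x i + t * s i| ≤
      lam * ∑ i, |x i| + t * ∑ i, (gvec n f lam x i - gradient f x i) * s i := by
    rw [Finset.mul_sum, Finset.mul_sum, Finset.mul_sum, ← Finset.sum_add_distrib]
    exact Finset.sum_le_sum fun i _ => habs i
  have hinner : ⟪gvec n f lam x, s⟫ =
      ⟪gradient f x, s⟫ + ∑ i, (gvec n f lam x i - gradient f x i) * s i := by
    simp only [PiLp.inner_apply, RCLike.inner_apply, conj_trivial,
      ← Finset.sum_add_distrib]
    apply Finset.sum_congr rfl
    intro i _
    ring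
  have hcub := hcubic x (x + t • s)
  rw [add_sub_cancel_left] at hcub
  rw [real_inner_smul_right, (hess n f x).map_smul, real_inner_smul_left,
    real_inner_smul_right, norm_smul, Real.norm_eq_abs, abs_of_pos ht,
    mul_pow] at hcub
  have hcube : LH / 6 * (t ^ 3 * ‖s‖ ^ 3) ≤ LH / 6 * t ^ 3 * ‖d‖ ^ 3 := by
    rw [← mul_assoc]
    gcongr
  have hadd : ∀ i, (x + t • s) i = x i + t * s i := by
    intro i
    simp
  rw [phi, phi]
  calc f (x + t • s) + lam * ∑ i, |(x + t • s) i|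
      = f (x + t • s) + lam * ∑ i, |x i + t * s i| := by
        rfl
    _ ≤ _ := by
        rw [hinner]
        nlinarith [hcub, hl1, hcube]
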